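/- In a finite tree (connected acyclic graph) that is bipartite with parts P and Z, such that every leaf lies in P, the center of the tree consists of a single vertex. -/
import Mathlib


open Finset

section stmt13helpers
open SimpleGraph

section helpers
variable {V : Type*} {G : SimpleGraph V}

/-- parity of walk length from a proper 2-coloring -/
lemma stmt13_walk_parity (c : V → Bool) (hc : ∀ u v, G.Adj u v → c u ≠ c v) :
    ∀ {u v : V} (p : G.Walk u v), (c u = c v ↔ Even p.length) := by
  intro u v p
  induction p with
  | nil => simp
  | @cons u x v h q ih =>
    have hne := hc _ _ h
    simp only [SimpleGraph.Walk.length_cons, Nat.even_add_one, ← ih]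
    cases hcu : c u <;> cases hcx : c x <;> cases hcv : c v <;> simp_all

/-- in a tree, every path is a geodesic -/
lemma stmt13_path_length (hconn : G.Connected) (hacyclic : G.IsAcyclic)
    {u v : V} (p : G.Walk u v) (hp : p.IsPath) :
    p.length = G.dist u v := by
  obtain ⟨q, hq⟩ := hconn.exists_walk_length_eq_dist u v
  have hq' : q.IsPath := q.isPath_of_length_eq_dist hq
  have := (isAcyclic_iff_path_unique.mp hacyclic) ⟨p, hp⟩ ⟨q, hq'⟩
  rw [show p = q from congrArg Subtype.val this, hq]

lemma stmt13_dist_getVert_le (hconn : G.Connected) {a b : V} (p : G.Walk a b) :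
    ∀ i : ℕ, G.dist a (p.getVert i) ≤ i := by
  intro i
  induction i with
  | zero => simp [SimpleGraph.Walk.getVert_zero]
  | succ n ih =>
    by_cases hn : n < p.length
    · have hadj := p.adj_getVert_succ hn
      have h1 : G.dist (p.getVert n) (p.getVert (n+1)) = 1 := dist_eq_one_iff_adj.mpr hadj
      have := hconn.dist_triangle (u := a) (v := p.getVert n) (w := p.getVert (n+1))
      omega
    · rw [p.getVert_of_length_le (by omega)]
      have h2 := SimpleGraph.dist_le p
      have h3 : p.getVert n = b := p.getVert_of_length_le (by omega)
      rw [h3] at ih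
      omega

/-- on a geodesic walk, `getVert i` is at distance `i` from the start -/
lemma stmt13_dist_getVert (hconn : G.Connected) {a b : V} (p : G.Walk a b)
    (hp : p.length = G.dist a b) {i : ℕ} (hi : i ≤ p.length) :
    G.dist a (p.getVert i) = i ∧ G.dist (p.getVert i) b = p.length - i := by
  have h1 : G.dist a (p.getVert i) ≤ i := stmt13_dist_getVert_le hconn p i
  have h2 : G.dist b (p.getVert i) ≤ p.length - i := by
    have := stmt13_dist_getVert_le hconn p.reverse (p.length - i)
    rwa [p.getVert_reverse, show p.length - (p.length - i) = i by omega] at this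
  have h3 := hconn.dist_triangle (u := a) (v := p.getVert i) (w := b)
  have h2' : G.dist (p.getVert i) b ≤ p.length - i := SimpleGraph.dist_comm (u:=b) ▸ h2
  rw [SimpleGraph.dist_comm (u:=b)] at h2
  omega

/-- splitting a path at a support vertex -/
lemma stmt13_split [DecidableEq V] (hconn : G.Connected) (hacyclic : G.IsAcyclic)
    {u v w : V} (p : G.Walk u v) (hp : p.IsPath) (hw : w ∈ p.support) :
    G.dist u v = G.dist u w + G.dist w v := by
  have hts := p.take_spec hw
  have h1 : (p.takeUntil w hw).length = G.dist u w :=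
    stmt13_path_length hconn hacyclic _ (hp.takeUntil hw)
  have h2 : (p.dropUntil w hw).length = G.dist w v :=
    stmt13_path_length hconn hacyclic _ (hp.dropUntil hw)
  have h3 := stmt13_path_length hconn hacyclic p hp
  have h4 := congrArg SimpleGraph.Walk.length hts
  rw [SimpleGraph.Walk.length_append] at h4
  omega

/-- key tree lemma: a vertex on the a–b geodesic lies on the geodesic from any
vertex `u` to `a` or to `b`. -/
lemma stmt13_key [DecidableEq V] (hconn : G.Connected) (hacyclic : G.IsAcyclic)
    {a b w : V} (P : G.Walk a b) (hP : P.IsPath) (hw : w ∈ P.support) (u : V) :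
    G.dist a u = G.dist a w + G.dist w u ∨ G.dist b u = G.dist b w + G.dist w u := by
  obtain ⟨q, hq⟩ := hconn.exists_walk_length_eq_dist u a
  have hq' : q.IsPath := q.isPath_of_length_eq_dist hq
  obtain ⟨r, hr⟩ := hconn.exists_walk_length_eq_dist u b
  have hr' : r.IsPath := r.isPath_of_length_eq_dist hr
  set s : G.Walk a b := q.reverse.append r with hs
  have hbp : s.bypass.IsPath := s.bypass_isPath
  have heq : P = s.bypass :=
    congrArg Subtype.val ((isAcyclic_iff_path_unique.mp hacyclic) ⟨P, hP⟩ ⟨s.bypass, hbp⟩)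
  have hws : w ∈ s.support := s.support_bypass_subset (heq ▸ hw)
  rw [SimpleGraph.Walk.mem_support_append_iff] at hws
  rcases hws with hws | hws
  · left
    rw [SimpleGraph.Walk.support_reverse, List.mem_reverse] at hws
    have := stmt13_split hconn hacyclic q hq' hws
    rw [SimpleGraph.dist_comm (u:=a) (v:=u), SimpleGraph.dist_comm (u:=w) (v:=u), this,
      SimpleGraph.dist_comm (u:=w) (v:=a)]
    omega
  · right
    have := stmt13_split hconn hacyclic r hr' hws
    rw [SimpleGraph.dist_comm (u:=b) (v:=u), SimpleGraph.dist_comm (u:=w) (v:=u), this,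
      SimpleGraph.dist_comm (u:=w) (v:=b)]
    omega

end helpers

section main
variable {V : Type*} [Fintype V] {G : SimpleGraph V}

/-- a farthest vertex from any vertex in a nontrivial tree is a leaf -/
lemma stmt13_leaf [DecidableEq V] [DecidableRel G.Adj]
    (hconn : G.Connected) (hacyclic : G.IsAcyclic)
    (c : V → Bool) (hc : ∀ u v, G.Adj u v → c u ≠ c v)
    (hcard : 1 < Fintype.card V) {z u : V}
    (hmax : ∀ x : V, G.dist z x ≤ G.dist z u) : G.degree u = 1 := by
  set m := G.dist z u with hm
  -- m ≥ 1
  obtain ⟨v, hv⟩ := Fintype.exists_ne_of_one_lt_card hcard z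
  have hm1 : 1 ≤ m := le_trans (hconn.pos_dist_of_ne (Ne.symm hv)) (hmax v)
  obtain ⟨P, hP⟩ := hconn.exists_walk_length_eq_dist z u
  have hP' : P.IsPath := P.isPath_of_length_eq_dist hP
  set x := P.getVert (m - 1) with hx
  have hadjxu : G.Adj x u := by
    have h := P.adj_getVert_succ (i := m - 1) (by omega)
    rw [show m - 1 + 1 = P.length by omega, P.getVert_length] at h
    exact h
  have hxkey : ∀ y : V, G.Adj u y → y = x := by
    intro y hy
    -- dist z y = m - 1, by parity and triangle
    have hpar1 : (c z = c u ↔ Even m) := by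
      have := stmt13_walk_parity c hc P; rwa [hP] at this
    have hpar2 : (c z = c y ↔ Even (G.dist z y)) := by
      obtain ⟨Q, hQ⟩ := hconn.exists_walk_length_eq_dist z y
      have := stmt13_walk_parity c hc Q; rwa [hQ] at this
    have hcy : c u ≠ c y := hc _ _ hy
    have htri : m ≤ G.dist z y + 1 := by
      have h1 : G.dist y u = 1 := dist_eq_one_iff_adj.mpr hy.symm
      have := hconn.dist_triangle (u := z) (v := y) (w := u)
      omega
    have hle : G.dist z y ≤ m := hmax y
    have hne : G.dist z y ≠ m := by
      intro h
      rw [h] at hpar2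
      have hiff : (c z = c u) ↔ (c z = c y) := by rw [hpar1, hpar2]
      cases hcz : c z <;> cases hcu : c u <;> cases hcy' : c y <;> simp_all
    have hzy : G.dist z y = m - 1 := by omega
    obtain ⟨Q, hQ⟩ := hconn.exists_walk_length_eq_dist z y
    have hQ' : Q.IsPath := Q.isPath_of_length_eq_dist hQ
    have hunotQ : u ∉ Q.support := by
      intro hu
      have := stmt13_split hconn hacyclic Q hQ' hu
      have h1 : G.dist u y = 1 := dist_eq_one_iff_adj.mpr hy
      omega
    -- build the path z → y → u
    have hunotQr : u ∉ Q.reverse.support := by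
      rwa [SimpleGraph.Walk.support_reverse, List.mem_reverse]
    set R : G.Walk u z := SimpleGraph.Walk.cons hy Q.reverse with hR
    have hR' : R.IsPath := (SimpleGraph.Walk.cons_isPath_iff _ _).mpr ⟨hQ'.reverse, hunotQr⟩
    have hRrev : R.reverse.IsPath := hR'.reverse
    have hPeq : P = R.reverse :=
      congrArg Subtype.val ((isAcyclic_iff_path_unique.mp hacyclic) ⟨P, hP'⟩ ⟨R.reverse, hRrev⟩)
    have hRlen : R.length = m := by
      simp [hR, SimpleGraph.Walk.length_cons, SimpleGraph.Walk.length_reverse, hQ, hzy]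
      omega
    have : P.getVert (m - 1) = y := by
      rw [hPeq, SimpleGraph.Walk.getVert_reverse, hRlen,
        show m - (m - 1) = 0 + 1 by omega, hR, SimpleGraph.Walk.getVert_cons_succ,
        SimpleGraph.Walk.getVert_zero]
    rw [← this, ← hx]
  have : G.neighborFinset u = {x} := by
    ext y
    simp only [SimpleGraph.mem_neighborFinset, Finset.mem_singleton]
    exact ⟨fun h => hxkey y h, fun h => h ▸ hadjxu.symm⟩
  simp [SimpleGraph.degree, this]
end main


end stmt13helpers

/-- In a finite tree which is properly 2-colored (bipartite, with part `P`
being the vertices colored `true` and part `Z` those colored `false`) and in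
which every leaf (degree-1 vertex) lies in `P`, the center of the tree (the
set of vertices of minimal eccentricity) consists of a single vertex. -/
theorem stmt13 {V : Type*} [Fintype V] [Nonempty V] (G : SimpleGraph V)
    [DecidableRel G.Adj]
    (hconn : G.Connected) (hacyclic : G.IsAcyclic)
    (c : V → Bool) (hc : ∀ u v, G.Adj u v → c u ≠ c v)
    (hleaf : ∀ v, G.degree v = 1 → c v = true) :
    ∃! z : V, ∀ v : V,
      (Finset.univ.sup fun u => G.dist z u) ≤ Finset.univ.sup fun u => G.dist v u := by

  classical
  by_cases hcard : Fintype.card V ≤ 1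
  · have : Subsingleton V := Fintype.card_le_one_iff_subsingleton.mp hcard
    refine ⟨Classical.arbitrary V, fun v => ?_, fun y _ => Subsingleton.elim _ _⟩
    rw [Subsingleton.elim (Classical.arbitrary V) v]
  push_neg at hcard
  set e : V → ℕ := fun v => Finset.univ.sup fun u => G.dist v u with he
  -- diametral pair
  obtain ⟨a, -, ha⟩ := Finset.exists_max_image Finset.univ e Finset.univ_nonempty
  obtain ⟨b, -, hb⟩ := Finset.exists_mem_eq_sup Finset.univ Finset.univ_nonempty
    (fun u => G.dist a u)
  set D := G.dist a b with hD
  have heaD : e a = D := hb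
  have hDa : ∀ u, G.dist a u ≤ D := fun u =>
    le_trans (Finset.le_sup (Finset.mem_univ u)) heaD.le
  have hDb : ∀ u, G.dist b u ≤ D := fun u =>
    le_trans (Finset.le_sup (Finset.mem_univ u)) (le_trans (ha b (Finset.mem_univ b)) heaD.le)
  have hDba : G.dist b a = D := le_antisymm (hDb a) (SimpleGraph.dist_comm (u := a) ▸ le_refl D)
  -- D ≥ 1
  obtain ⟨v0, hv0⟩ := Fintype.exists_ne_of_one_lt_card hcard a
  have hD1 : 1 ≤ D := le_trans (hconn.pos_dist_of_ne (Ne.symm hv0)) (hDa v0)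
  -- a and b are leaves, hence colored true, hence D is even
  have hla : G.degree a = 1 := stmt13_leaf hconn hacyclic c hc hcard
    (z := b) (u := a) (fun x => hDba ▸ hDb x)
  have hlb : G.degree b = 1 := stmt13_leaf hconn hacyclic c hc hcard
    (z := a) (u := b) (fun x => hDa x)
  have hcab : c a = c b := by rw [hleaf a hla, hleaf b hlb]
  obtain ⟨P, hP⟩ := hconn.exists_walk_length_eq_dist a b
  have hP' : P.IsPath := P.isPath_of_length_eq_dist hP
  have hEvenD : Even D := by
    have := stmt13_walk_parity c hc P
    rw [hP, ← hD, ← this] at *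
    exact this.mp hcab
  obtain ⟨r, hr⟩ := hEvenD
  -- the midpoint w
  set w := P.getVert r with hw
  have hwd := stmt13_dist_getVert hconn P hP (i := r) (by omega)
  have hwa : G.dist a w = r := hwd.1
  have hwb : G.dist w b = r := by rw [hwd.2, hP, ← hD]; omega
  have hwmem : w ∈ P.support :=
    SimpleGraph.Walk.mem_support_iff_exists_getVert.mpr ⟨r, rfl, by omega⟩
  have hkey := stmt13_key hconn hacyclic P hP' hwmem
  -- eccentricity of w is at most r
  have hew : ∀ u, G.dist w u ≤ r := by
    intro u
    rcases hkey u with h | h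
    · have := hDa u; omega
    · have h2 : G.dist b w = r := SimpleGraph.dist_comm (u := w) ▸ hwb
      have := hDb u; omega
  have hewr : e w ≤ r := Finset.sup_le fun u _ => hew u
  -- every eccentricity is at least r
  have hlow : ∀ v, r ≤ e v := by
    intro v
    have h1 : G.dist v a ≤ e v := Finset.le_sup (Finset.mem_univ a)
    have h2 : G.dist v b ≤ e v := Finset.le_sup (Finset.mem_univ b)
    have h3 : D ≤ G.dist a v + G.dist v b := hconn.dist_triangle
    have h4 : G.dist a v = G.dist v a := SimpleGraph.dist_comm
    omega
  refine ⟨w, fun v => le_trans hewr (hlow v), fun z hz => ?_⟩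
  -- uniqueness
  have hez : e z ≤ r := le_trans (hz w) hewr
  have hza : G.dist z a ≤ r := le_trans (Finset.le_sup (Finset.mem_univ a)) hez
  have hzb : G.dist z b ≤ r := le_trans (Finset.le_sup (Finset.mem_univ b)) hez
  have htri : D ≤ G.dist a z + G.dist z b := hconn.dist_triangle
  have hcomm : G.dist a z = G.dist z a := SimpleGraph.dist_comm
  have hzar : G.dist a z = r := by omega
  have hzbr : G.dist z b = r := by omega
  have hwz0 : G.dist w z = 0 := by
    rcases hkey z with h | h
    · omega
    · have h2 : G.dist b w = r := SimpleGraph.dist_comm (u := w) ▸ hwb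
      have h3 : G.dist b z = r := SimpleGraph.dist_comm (u := z) ▸ hzbr
      omega
  exact (hconn.dist_eq_zero_iff.mp (SimpleGraph.dist_comm (u := w) ▸ hwz0)).symm ▸ rfl
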